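/- Let α₀, α₁, α₂, α₃, α₄, α₅, b₀, b₁, μ, ν and Ω ≠ 0 be real numbers satisfying: (E1) −6α₁μ²b₁/Ω − 12α₂μ²b₁/Ω + α₃b₁² + 360α₅μ⁴/Ω² = 0; (E2) −240α₅μ⁴/Ω + 4α₁μ²b₁ + 4α₂μ²b₁ − 12α₂μ²b₀/Ω − 12α₄μ²/Ω + 2α₃b₀b₁ + α₀b₁ = 0; (E3) ν + μ + α₀μb₀ + 4α₂μ³b₀ + α₃μb₀² + 4α₄μ³ + 16α₅μ⁵ = 0. Then u(x, t) = b₀ + b₁·Ω/cosh²(μx + νt) satisfies the higher-order Korteweg–de Vries (Olver) equation u_t + u_x + α₀·u·u_x + α₁·u_x·u_{xx} + α₂·u·u_{xxx} + α₃·u²·u_x + α₄·u_{xxx} + α₅·u_{xxxxx} = 0 for all (x, t) ∈ ℝ². -/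

import Mathlib

open Real

private lemma tanh_hda (A B y : ℝ) :
    HasDerivAt (fun y => Real.tanh (A * y + B)) (A * (1 - Real.tanh (A * y + B) ^ 2)) y := by
  have hz : HasDerivAt (fun y : ℝ => A * y + B) A y := by
    simpa using ((hasDerivAt_id y).const_mul A).add_const B
  set z := A * y + B with hzdef
  have hcz : Real.cosh z ≠ 0 := (Real.cosh_pos z).ne'
  have hs : HasDerivAt Real.sinh (Real.cosh z) z := Real.hasDerivAt_sinh z
  have hc : HasDerivAt Real.cosh (Real.sinh z) z := Real.hasDerivAt_cosh z
  have htanh : HasDerivAt Real.tanh (1 - Real.tanh z ^ 2) z := by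
    have h := hs.div hc hcz
    have he : Real.tanh = fun w => Real.sinh w / Real.cosh w := by
      funext w; exact Real.tanh_eq_sinh_div_cosh w
    rw [he]
    convert h using 1
    · rfl
    · rfl
    · rfl
    show 1 - (Real.sinh z / Real.cosh z) ^ 2 = _
    have h1 : Real.cosh z ^ 2 - Real.sinh z ^ 2 = 1 := Real.cosh_sq_sub_sinh_sq z
    field_simp [Real.tanh_eq_sinh_div_cosh]
  have H := htanh.comp y hz
  rw [show (1 - Real.tanh z ^ 2) * A = A * (1 - Real.tanh z ^ 2) by ring] at H
  exact H

private lemma poly7_hda (c0 c1 c2 c3 c4 c5 c6 c7 z : ℝ) :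
    HasDerivAt (fun T : ℝ => c0 + c1 * T + c2 * T ^ 2 + c3 * T ^ 3 + c4 * T ^ 4
        + c5 * T ^ 5 + c6 * T ^ 6 + c7 * T ^ 7)
      (c1 + 2 * c2 * z + 3 * c3 * z ^ 2 + 4 * c4 * z ^ 3 + 5 * c5 * z ^ 4
        + 6 * c6 * z ^ 5 + 7 * c7 * z ^ 6) z := by
  have h : ∀ (k : ℕ) (c : ℝ), HasDerivAt (fun T : ℝ => c * T ^ k)
      (c * (k * z ^ (k - 1))) z := fun k c => (hasDerivAt_pow k z).const_mul c
  have H := ((((((((hasDerivAt_const z c0).add (h 1 c1)).add (h 2 c2)).add (h 3 c3)).add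
      (h 4 c4)).add (h 5 c5)).add (h 6 c6)).add (h 7 c7))
  convert H using 1
  · rfl
  · rfl
  · funext x; simp only [Pi.add_apply]; ring
  · norm_num; ring

private lemma comp_hda (c0 c1 c2 c3 c4 c5 c6 c7 A B y : ℝ) :
    HasDerivAt (fun y => c0 + c1 * Real.tanh (A * y + B) + c2 * Real.tanh (A * y + B) ^ 2
        + c3 * Real.tanh (A * y + B) ^ 3 + c4 * Real.tanh (A * y + B) ^ 4
        + c5 * Real.tanh (A * y + B) ^ 5 + c6 * Real.tanh (A * y + B) ^ 6
        + c7 * Real.tanh (A * y + B) ^ 7)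
      ((c1 + 2 * c2 * Real.tanh (A * y + B) + 3 * c3 * Real.tanh (A * y + B) ^ 2
        + 4 * c4 * Real.tanh (A * y + B) ^ 3 + 5 * c5 * Real.tanh (A * y + B) ^ 4
        + 6 * c6 * Real.tanh (A * y + B) ^ 5 + 7 * c7 * Real.tanh (A * y + B) ^ 6)
        * (A * (1 - Real.tanh (A * y + B) ^ 2))) y :=
  by
    have H := (poly7_hda c0 c1 c2 c3 c4 c5 c6 c7 (Real.tanh (A * y + B))).comp y (tanh_hda A B y)
    exact H

private lemma deriv_poly_tanh (c0 c1 c2 c3 c4 c5 c6 c7 d0 d1 d2 d3 d4 d5 d6 d7 A B : ℝ)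
    (h : ∀ T : ℝ, (c1 + 2 * c2 * T + 3 * c3 * T ^ 2 + 4 * c4 * T ^ 3 + 5 * c5 * T ^ 4
        + 6 * c6 * T ^ 5 + 7 * c7 * T ^ 6) * (A * (1 - T ^ 2))
      = d0 + d1 * T + d2 * T ^ 2 + d3 * T ^ 3 + d4 * T ^ 4 + d5 * T ^ 5 + d6 * T ^ 6
        + d7 * T ^ 7) :
    deriv (fun y => c0 + c1 * Real.tanh (A * y + B) + c2 * Real.tanh (A * y + B) ^ 2
        + c3 * Real.tanh (A * y + B) ^ 3 + c4 * Real.tanh (A * y + B) ^ 4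
        + c5 * Real.tanh (A * y + B) ^ 5 + c6 * Real.tanh (A * y + B) ^ 6
        + c7 * Real.tanh (A * y + B) ^ 7)
      = fun y => d0 + d1 * Real.tanh (A * y + B) + d2 * Real.tanh (A * y + B) ^ 2
        + d3 * Real.tanh (A * y + B) ^ 3 + d4 * Real.tanh (A * y + B) ^ 4
        + d5 * Real.tanh (A * y + B) ^ 5 + d6 * Real.tanh (A * y + B) ^ 6
        + d7 * Real.tanh (A * y + B) ^ 7 := by
  funext y
  rw [(comp_hda c0 c1 c2 c3 c4 c5 c6 c7 A B y).deriv]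
  exact h (Real.tanh (A * y + B))

theorem stmt19 (α₀ α₁ α₂ α₃ α₄ α₅ b₀ b₁ μ ν Ω : ℝ) (hΩ : Ω ≠ 0)
    (hE1 : -6 * α₁ * μ ^ 2 * b₁ / Ω - 12 * α₂ * μ ^ 2 * b₁ / Ω
      + α₃ * b₁ ^ 2 + 360 * α₅ * μ ^ 4 / Ω ^ 2 = 0)
    (hE2 : -240 * α₅ * μ ^ 4 / Ω + 4 * α₁ * μ ^ 2 * b₁ + 4 * α₂ * μ ^ 2 * b₁
      - 12 * α₂ * μ ^ 2 * b₀ / Ω - 12 * α₄ * μ ^ 2 / Ω + 2 * α₃ * b₀ * b₁ + α₀ * b₁ = 0)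
    (hE3 : ν + μ + α₀ * μ * b₀ + 4 * α₂ * μ ^ 3 * b₀ + α₃ * μ * b₀ ^ 2
      + 4 * α₄ * μ ^ 3 + 16 * α₅ * μ ^ 5 = 0)
    (u : ℝ → ℝ → ℝ)
    (hu : ∀ x t : ℝ, u x t = b₀ + b₁ * Ω / (Real.cosh (μ * x + ν * t)) ^ 2) :
    ∀ x t : ℝ,
      deriv (fun τ => u x τ) t + deriv (fun y => u y t) x
        + α₀ * u x t * deriv (fun y => u y t) x
        + α₁ * deriv (fun y => u y t) x * iteratedDeriv 2 (fun y => u y t) x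
        + α₂ * u x t * iteratedDeriv 3 (fun y => u y t) x
        + α₃ * (u x t) ^ 2 * deriv (fun y => u y t) x
        + α₄ * iteratedDeriv 3 (fun y => u y t) x
        + α₅ * iteratedDeriv 5 (fun y => u y t) x = 0 := by
  intro x t
  have hsech : ∀ z : ℝ, b₁ * Ω / Real.cosh z ^ 2 = b₁ * Ω * (1 - Real.tanh z ^ 2) := by
    intro z
    have hc : Real.cosh z ≠ 0 := (Real.cosh_pos z).ne'
    have h1 : Real.cosh z ^ 2 - Real.sinh z ^ 2 = 1 := Real.cosh_sq_sub_sinh_sq z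
    rw [Real.tanh_eq_sinh_div_cosh]
    field_simp
    rw [h1]; ring
  set a := b₁ * Ω with ha
  -- spatial profile
  have h0 : (fun y => u y t) = fun y => (b₀ + a) + 0 * Real.tanh (μ * y + ν * t)
      + (-a) * Real.tanh (μ * y + ν * t) ^ 2 + 0 * Real.tanh (μ * y + ν * t) ^ 3
      + 0 * Real.tanh (μ * y + ν * t) ^ 4 + 0 * Real.tanh (μ * y + ν * t) ^ 5
      + 0 * Real.tanh (μ * y + ν * t) ^ 6 + 0 * Real.tanh (μ * y + ν * t) ^ 7 := by
    funext y
    rw [hu, hsech]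
    ring
  have h1 := deriv_poly_tanh (b₀ + a) 0 (-a) 0 0 0 0 0
      0 (-2*a*μ) 0 (2*a*μ) 0 0 0 0 μ (ν * t) (by intro T; ring)
  have h2 := deriv_poly_tanh 0 (-2*a*μ) 0 (2*a*μ) 0 0 0 0
      (-2*a*μ^2) 0 (8*a*μ^2) 0 (-6*a*μ^2) 0 0 0 μ (ν * t) (by intro T; ring)
  have h3 := deriv_poly_tanh (-2*a*μ^2) 0 (8*a*μ^2) 0 (-6*a*μ^2) 0 0 0
      0 (16*a*μ^3) 0 (-40*a*μ^3) 0 (24*a*μ^3) 0 0 μ (ν * t) (by intro T; ring)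
  have h4 := deriv_poly_tanh 0 (16*a*μ^3) 0 (-40*a*μ^3) 0 (24*a*μ^3) 0 0
      (16*a*μ^4) 0 (-136*a*μ^4) 0 (240*a*μ^4) 0 (-120*a*μ^4) 0 μ (ν * t) (by intro T; ring)
  have h5 := deriv_poly_tanh (16*a*μ^4) 0 (-136*a*μ^4) 0 (240*a*μ^4) 0 (-120*a*μ^4) 0
      0 (-272*a*μ^5) 0 (1232*a*μ^5) 0 (-1680*a*μ^5) 0 (720*a*μ^5) μ (ν * t) (by intro T; ring)
  -- temporal profile
  have h0t : (fun τ => u x τ) = fun τ => (b₀ + a) + 0 * Real.tanh (ν * τ + μ * x)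
      + (-a) * Real.tanh (ν * τ + μ * x) ^ 2 + 0 * Real.tanh (ν * τ + μ * x) ^ 3
      + 0 * Real.tanh (ν * τ + μ * x) ^ 4 + 0 * Real.tanh (ν * τ + μ * x) ^ 5
      + 0 * Real.tanh (ν * τ + μ * x) ^ 6 + 0 * Real.tanh (ν * τ + μ * x) ^ 7 := by
    funext τ
    rw [hu, hsech, show μ * x + ν * τ = ν * τ + μ * x by ring]
    ring
  have ht : deriv (fun τ => u x τ) t
      = (0 + 2 * (-a) * Real.tanh (ν * t + μ * x) + 3 * 0 * Real.tanh (ν * t + μ * x) ^ 2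
        + 4 * 0 * Real.tanh (ν * t + μ * x) ^ 3 + 5 * 0 * Real.tanh (ν * t + μ * x) ^ 4
        + 6 * 0 * Real.tanh (ν * t + μ * x) ^ 5 + 7 * 0 * Real.tanh (ν * t + μ * x) ^ 6)
        * (ν * (1 - Real.tanh (ν * t + μ * x) ^ 2)) := by
    rw [h0t]
    exact (comp_hda (b₀ + a) 0 (-a) 0 0 0 0 0 ν (μ * x) t).deriv
  have harg : Real.tanh (ν * t + μ * x) = Real.tanh (μ * x + ν * t) := by
    rw [add_comm]
  have e2 : iteratedDeriv 2 (fun y => u y t) x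
      = deriv (deriv (fun y => u y t)) x := by
    rw [show (2:ℕ) = 1 + 1 from rfl, iteratedDeriv_succ, iteratedDeriv_one]
  have e3 : iteratedDeriv 3 (fun y => u y t) x
      = deriv (deriv (deriv (fun y => u y t))) x := by
    rw [show (3:ℕ) = 1 + 1 + 1 from rfl, iteratedDeriv_succ, iteratedDeriv_succ,
      iteratedDeriv_one]
  have e5 : iteratedDeriv 5 (fun y => u y t) x
      = deriv (deriv (deriv (deriv (deriv (fun y => u y t))))) x := by
    rw [show (5:ℕ) = 1 + 1 + 1 + 1 + 1 from rfl, iteratedDeriv_succ, iteratedDeriv_succ,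
      iteratedDeriv_succ, iteratedDeriv_succ, iteratedDeriv_one]
  rw [e2, e3, e5, ht, harg, h0, h1, h2, h3, h4, h5, hu x t, hsech]
  set T := Real.tanh (μ * x + ν * t) with hT
  simp only
  have hE1' : -6 * α₁ * μ ^ 2 * b₁ * Ω - 12 * α₂ * μ ^ 2 * b₁ * Ω
      + α₃ * b₁ ^ 2 * Ω ^ 2 + 360 * α₅ * μ ^ 4 = 0 := by
    have h := hE1
    field_simp at h
    have h2 : Ω ^ 2 * (-6 * α₁ * μ ^ 2 * b₁ * Ω - 12 * α₂ * μ ^ 2 * b₁ * Ω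
        + α₃ * b₁ ^ 2 * Ω ^ 2 + 360 * α₅ * μ ^ 4) = 0 := by linear_combination Ω ^ 2 * h
    exact (mul_eq_zero.mp h2).resolve_left (pow_ne_zero 2 hΩ)
  have hE2' : -240 * α₅ * μ ^ 4 + 4 * α₁ * μ ^ 2 * b₁ * Ω + 4 * α₂ * μ ^ 2 * b₁ * Ω
      - 12 * α₂ * μ ^ 2 * b₀ - 12 * α₄ * μ ^ 2 + 2 * α₃ * b₀ * b₁ * Ω + α₀ * b₁ * Ω = 0 := by
    have h := hE2
    field_simp at h
    linear_combination h
  rw [ha]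
  linear_combination (b₁ * Ω * (-2*T + 2*T^3)) * hE3
    + (b₁ * Ω * μ * (1 - T^2) * (-2*T + 2*T^3)) * hE2'
    + (b₁ * Ω * μ * (1 - T^2)^2 * (-2*T + 2*T^3)) * hE1'
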